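/- arXiv:1712.09451 — 3 statements merged into one kernel-verified Lean document; each statement's English description precedes it below -/
import Mathlib

section
/- For every irrational number α, the inequality |α - p/q| < 1/(√5 · q²) has infinitely many rational solutions p/q with q ≥ 1. -/
open Real

private lemma irr_ne_div {α : ℝ} (hα : Irrational α) (x y : ℤ) : α ≠ (x:ℝ)/(y:ℝ) := by
  intro h
  exact hα ⟨(x/y : ℚ), by push_cast; exact h.symm⟩

private lemma collapse {s u v : ℝ} (hs0 : 0 < s) (hs : s^2 = 5) (hu : 0 < u) (hv : 0 < v)
    (h : 1/(s*u^2) + 1/(s*v^2) ≤ 1/(u*v)) : v^2 + u^2 ≤ s*u*v := by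
  rw [div_add_div _ _ (by positivity) (by positivity),
    div_le_div_iff₀ (by positivity) (by positivity)] at h
  nlinarith [h, mul_pos (mul_pos hs0 hu) hv, hs, sq_nonneg (u*v)]

private lemma sqrt5_eq {s b d : ℝ} (hs : s^2 = 5) (hb : 0 < b) (hd : 0 < d)
    (h1 : d^2 + b^2 ≤ s*b*d) (h2 : (b+d)^2 + b^2 ≤ s*b*(b+d)) : s*b = 2*d + b := by
  have e1 : (2*d - s*b)^2 ≤ b^2 := by nlinarith [h1]
  have e2 : (2*(b+d) - s*b)^2 ≤ b^2 := by nlinarith [h2]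
  have h3 : -b ≤ 2*d - s*b := by nlinarith [sq_nonneg (2*d - s*b + b)]
  have h4 : 2*(b+d) - s*b ≤ b := by nlinarith [sq_nonneg (2*(b+d) - s*b - b)]
  linarith

private lemma not_sqrt5_rat (b d : ℤ) (hb : 0 < b) (h : Real.sqrt 5 * (b:ℝ) = 2*(d:ℝ) + b) :
    False := by
  have hirr : Irrational (Real.sqrt 5) := by
    have := (by norm_num : Nat.Prime 5).irrational_sqrt
    simpa using this
  exact hirr ⟨(2*d+b)/b, by push_cast; rw [div_eq_iff (by exact_mod_cast hb.ne')]; linarith⟩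

private lemma hurwitz_triple (α : ℝ) (hα : Irrational α) {a b c d : ℤ} (hb : 0 < b) (hd : 0 < d)
    (h1 : (a:ℝ)/b < α) (h2 : α < (c:ℝ)/d) (hdet : b*c - a*d = 1) :
    ∃ p q : ℤ, 0 < q ∧ (a:ℝ)/b ≤ (p:ℝ)/q ∧ (p:ℝ)/q ≤ (c:ℝ)/d ∧
      |α - (p:ℝ)/q| < 1 / (Real.sqrt 5 * (q:ℝ)^2) := by
  set s := Real.sqrt 5 with hsdef
  have hs : s^2 = 5 := Real.sq_sqrt (by norm_num)
  have hs0 : 0 < s := Real.sqrt_pos.mpr (by norm_num)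
  have hb' : (0:ℝ) < b := by exact_mod_cast hb
  have hd' : (0:ℝ) < d := by exact_mod_cast hd
  have hD' : (0:ℝ) < (b:ℝ) + d := by linarith
  have hdetR : (b:ℝ)*c - a*d = 1 := by exact_mod_cast hdet
  have hgap : (c:ℝ)/d - (a:ℝ)/b = 1/((b:ℝ)*d) := by
    field_simp
    linear_combination hdetR
  have hma : ((a:ℝ)+c)/((b:ℝ)+d) - (a:ℝ)/b = 1/((b:ℝ)*((b:ℝ)+d)) := by
    field_simp
    linear_combination hdetR
  have hcm : (c:ℝ)/d - ((a:ℝ)+c)/((b:ℝ)+d) = 1/((d:ℝ)*((b:ℝ)+d)) := by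
    have e : (c:ℝ)/d - ((a:ℝ)+c)/((b:ℝ)+d) = 1/((b:ℝ)*d) - 1/((b:ℝ)*((b:ℝ)+d)) := by
      linarith [hgap, hma]
    rw [e]; field_simp; ring
  have hma' : (a:ℝ)/b < ((a:ℝ)+c)/((b:ℝ)+d) := by
    nlinarith [hma, one_div_pos.mpr (mul_pos hb' hD')]
  have hcm' : ((a:ℝ)+c)/((b:ℝ)+d) < (c:ℝ)/d := by
    nlinarith [hcm, one_div_pos.mpr (mul_pos hd' hD')]
  by_contra hcon
  push_neg at hcon
  have A := hcon a b hb (le_refl _) (le_of_lt (h1.trans h2))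
  have B := hcon c d hd (le_of_lt (h1.trans h2)) (le_refl _)
  have C := hcon (a+c) (b+d) (by omega)
    (by push_cast; linarith) (by push_cast; linarith)
  rw [abs_of_pos (by linarith)] at A
  rw [abs_of_neg (by linarith)] at B
  push_cast at C
  have hAB : (d:ℝ)^2 + (b:ℝ)^2 ≤ s*(b:ℝ)*d := by
    apply collapse hs0 hs hb' hd'
    linarith [A, B, hgap]
  have hαm : α ≠ ((a:ℝ)+c)/((b:ℝ)+d) := by
    intro h
    apply irr_ne_div hα (a+c) (b+d)
    rw [h]; push_cast; rfl
  rcases lt_or_gt_of_ne hαm with hlt | hgt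
  · -- α < mediant : bad pairs (a,b) and mediant
    rw [abs_of_neg (by linarith)] at C
    have hAC : ((b:ℝ)+d)^2 + (b:ℝ)^2 ≤ s*(b:ℝ)*((b:ℝ)+d) := by
      apply collapse hs0 hs hb' hD'
      linarith [A, C, hma]
    exact not_sqrt5_rat b d hb (sqrt5_eq hs hb' hd' hAB hAC)
  · -- mediant < α : bad pairs (c,d) and mediant
    rw [abs_of_pos (by linarith)] at C
    have hBC : ((d:ℝ)+b)^2 + (d:ℝ)^2 ≤ s*(d:ℝ)*((d:ℝ)+b) := by
      have h' : ((b:ℝ)+d)^2 + (d:ℝ)^2 ≤ s*(d:ℝ)*((b:ℝ)+d) := by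
        apply collapse hs0 hs hd' hD'
        linarith [B, C, hcm]
      nlinarith [h']
    have hBA : (b:ℝ)^2 + (d:ℝ)^2 ≤ s*(d:ℝ)*b := by nlinarith [hAB]
    exact not_sqrt5_rat d b hd (sqrt5_eq hs hd' hb' hBA hBC)

open Classical in
private noncomputable def sb (α : ℝ) : ℕ → (ℤ × ℤ) × (ℤ × ℤ)
  | 0 => ((⌊α⌋, 1), (⌊α⌋ + 1, 1))
  | n+1 =>
      if α < (((sb α n).1.1 + (sb α n).2.1 : ℤ):ℝ) / (((sb α n).1.2 + (sb α n).2.2 : ℤ):ℝ) then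
        ((sb α n).1, ((sb α n).1.1 + (sb α n).2.1, (sb α n).1.2 + (sb α n).2.2))
      else
        (((sb α n).1.1 + (sb α n).2.1, (sb α n).1.2 + (sb α n).2.2), (sb α n).2)

private lemma sb_inv (α : ℝ) (hα : Irrational α) (n : ℕ) :
    0 < (sb α n).1.2 ∧ 0 < (sb α n).2.2 ∧
    ((sb α n).1.1:ℝ)/((sb α n).1.2:ℝ) < α ∧ α < ((sb α n).2.1:ℝ)/((sb α n).2.2:ℝ) ∧
    (sb α n).1.2 * (sb α n).2.1 - (sb α n).1.1 * (sb α n).2.2 = 1 ∧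
    (n:ℤ) + 2 ≤ (sb α n).1.2 + (sb α n).2.2 := by
  induction n with
  | zero =>
    simp only [sb]
    refine ⟨one_pos, one_pos, ?_, ?_, by ring, by norm_num⟩
    · simp only [Int.cast_one, div_one]
      exact lt_of_le_of_ne (Int.floor_le α) (Ne.symm (hα.ne_int ⌊α⌋))
    · simp only [Int.cast_one, div_one]
      push_cast
      exact Int.lt_floor_add_one α
  | succ n ih =>
    obtain ⟨hb, hd, h1, h2, hdet, hsum⟩ := ih
    have hne : α ≠ (((sb α n).1.1 + (sb α n).2.1 : ℤ):ℝ) /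
        (((sb α n).1.2 + (sb α n).2.2 : ℤ):ℝ) := irr_ne_div hα _ _
    simp only [sb]
    split_ifs with h
    · refine ⟨hb, by dsimp only; omega, h1, h, by dsimp only; linear_combination hdet, by dsimp only; push_cast; omega⟩
    · have h' : (((sb α n).1.1 + (sb α n).2.1 : ℤ):ℝ) /
          (((sb α n).1.2 + (sb α n).2.2 : ℤ):ℝ) < α := lt_of_le_of_ne (not_lt.mp h) hne.symm
      refine ⟨by dsimp only; omega, hd, h', h2, by dsimp only; linear_combination hdet, by dsimp only; push_cast; omega⟩

theorem stmt_5 (α : ℝ) (hα : Irrational α) :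
    {pq : ℤ × ℤ | 1 ≤ pq.2 ∧
      |α - (pq.1 : ℝ) / (pq.2 : ℝ)| < 1 / (Real.sqrt 5 * (pq.2 : ℝ) ^ 2)}.Infinite := by
  set S := {pq : ℤ × ℤ | 1 ≤ pq.2 ∧
      |α - (pq.1 : ℝ) / (pq.2 : ℝ)| < 1 / (Real.sqrt 5 * (pq.2 : ℝ) ^ 2)} with hS
  have key : ∀ n : ℕ, ∃ pq : ℤ × ℤ, pq ∈ S ∧ |α - (pq.1:ℝ)/(pq.2:ℝ)| ≤ 2/((n:ℝ)+2) := by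
    intro n
    obtain ⟨hb, hd, h1, h2, hdet, hsum⟩ := sb_inv α hα n
    set a := (sb α n).1.1
    set b := (sb α n).1.2
    set c := (sb α n).2.1
    set d := (sb α n).2.2
    obtain ⟨p, q, hq, hl, hr, hlt⟩ := hurwitz_triple α hα hb hd h1 h2 hdet
    refine ⟨(p, q), ⟨hq, hlt⟩, ?_⟩
    have hb' : (1:ℝ) ≤ b := by exact_mod_cast hb
    have hd' : (1:ℝ) ≤ d := by exact_mod_cast hd
    have hsum' : (n:ℝ) + 2 ≤ (b:ℝ) + d := by exact_mod_cast hsum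
    have hdetR : (b:ℝ)*c - a*d = 1 := by exact_mod_cast hdet
    have hgap : (c:ℝ)/d - (a:ℝ)/b = 1/((b:ℝ)*d) := by
      field_simp
      linear_combination hdetR
    have habs : |α - (p:ℝ)/q| ≤ (c:ℝ)/d - (a:ℝ)/b :=
      abs_le.mpr ⟨by linarith, by linarith⟩
    have hbd : ((n:ℝ)+2)/2 ≤ (b:ℝ)*d := by nlinarith
    have : (1:ℝ)/((b:ℝ)*d) ≤ 2/((n:ℝ)+2) := by
      rw [div_le_div_iff₀ (by nlinarith) (by positivity)]
      linarith
    linarith [habs, hgap]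
  by_contra hfin
  rw [Set.not_infinite] at hfin
  obtain ⟨e0, he0, _⟩ := key 0
  obtain ⟨mn, hmn, hmin⟩ := Set.exists_min_image S (fun pq => |α - (pq.1:ℝ)/(pq.2:ℝ)|) hfin ⟨e0, he0⟩
  have hε : 0 < |α - (mn.1:ℝ)/(mn.2:ℝ)| := by
    rw [abs_pos, sub_ne_zero]
    exact irr_ne_div hα mn.1 mn.2
  set ε := |α - (mn.1:ℝ)/(mn.2:ℝ)|
  obtain ⟨n, hn⟩ := exists_nat_gt (2/ε)
  obtain ⟨pq, hpq, hclose⟩ := key n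
  have h2n : 2/((n:ℝ)+2) < ε := by
    rw [div_lt_iff₀ (by positivity)]
    rw [div_lt_iff₀ hε] at hn
    nlinarith
  have := hmin pq hpq
  linarith [hclose]
end

section
/- For the golden ratio φ = (1+√5)/2, and any constant c > √5, there are only finitely many pairs of integers (p, q) with q ≥ 1 satisfying |φ - p/q| < 1/(c·q²). -/
lemma aux_irr : Irrational (Real.sqrt 5) := by
  simpa using (Nat.prime_five).irrational_sqrt

lemma aux_ne (p q : ℤ) (hq : 1 ≤ q) : p^2 - p*q - q^2 ≠ 0 := by
  intro h
  have hq0 : (0:ℝ) < (q:ℝ) := by exact_mod_cast hq.trans_lt' (by norm_num)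
  have hr : ((p:ℝ))^2 - p*q - (q:ℝ)^2 = 0 := by exact_mod_cast congrArg (Int.cast : ℤ → ℝ) h
  have hkey : ((2*p - q : ℤ) : ℝ)^2 = 5 * (q:ℝ)^2 := by push_cast; nlinarith [hr]
  have habs : |((2*p - q : ℤ):ℝ)| = Real.sqrt 5 * q := by
    rw [← Real.sqrt_sq_eq_abs, hkey,
      show (5:ℝ) * (q:ℝ)^2 = (Real.sqrt 5 * q)^2 by
        rw [mul_pow, Real.sq_sqrt (by norm_num)]]
    exact Real.sqrt_sq (by positivity)
  have heq : Real.sqrt 5 = ((((2*p - q).natAbs : ℚ) / (q : ℚ) : ℚ) : ℝ) := by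
    push_cast
    rw [eq_div_iff (by positivity), Nat.cast_natAbs]
    push_cast
    rw [← habs]
    push_cast
    ring_nf
  exact aux_irr ⟨_, heq.symm⟩

theorem stmt_6 (c : ℝ) (hc : Real.sqrt 5 < c) :
    {pq : ℤ × ℤ | 1 ≤ pq.2 ∧
      |(1 + Real.sqrt 5) / 2 - (pq.1 : ℝ) / (pq.2 : ℝ)| < 1 / (c * (pq.2 : ℝ) ^ 2)}.Finite := by
  set s := Real.sqrt 5 with hs
  have hs2 : s ^ 2 = 5 := Real.sq_sqrt (by norm_num)
  have hs0 : 0 ≤ s := Real.sqrt_nonneg 5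
  have hs_lt : 2 < s := by nlinarith
  have hs3 : s < 3 := by nlinarith
  have hc0 : (0:ℝ) < c := by linarith
  have hcs : 0 < c - s := by linarith
  set Q : ℤ := max 1 ⌈1 / (c * (c - s))⌉ with hQ
  apply Set.Finite.subset ((Set.finite_Icc (-(3*Q)) (3*Q)).prod (Set.finite_Icc 1 Q))
  rintro ⟨p, q⟩ ⟨hq, habs⟩
  simp only [Set.mem_setOf_eq] at hq habs
  have hq0 : (0:ℝ) < (q:ℝ) := by exact_mod_cast lt_of_lt_of_le (by norm_num) hq
  have hq1 : (1:ℝ) ≤ (q:ℝ) := by exact_mod_cast hq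
  have hcq : (0:ℝ) < c * (q:ℝ)^2 := by positivity
  set A := |(1 + s) / 2 - (p : ℝ) / (q : ℝ)| with hA
  have hA0 : 0 ≤ A := abs_nonneg _
  have hAlt : A * (c * (q:ℝ)^2) < 1 := by
    rw [← lt_div_iff₀ hcq]; exact habs
  -- integer lower bound
  have hne := aux_ne p q hq
  have h1le : (1:ℝ) ≤ |((p^2 - p*q - q^2 : ℤ) : ℝ)| := by
    have := Int.one_le_abs hne
    exact_mod_cast this
  -- identity
  have hid : ((p^2 - p*q - q^2 : ℤ) : ℝ) =
      (q:ℝ)^2 * (((1 + s)/2 - (p:ℝ)/(q:ℝ)) * (((1 + s)/2 - (p:ℝ)/(q:ℝ)) - s)) := by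
    have hqne : (q:ℝ) ≠ 0 := ne_of_gt hq0
    push_cast
    field_simp
    linear_combination ((q:ℝ))^2 * hs2
  have hkey : (1:ℝ) ≤ (q:ℝ)^2 * (A * (A + s)) := by
    calc (1:ℝ) ≤ |((p^2 - p*q - q^2 : ℤ) : ℝ)| := h1le
    _ = (q:ℝ)^2 * (A * |((1 + s)/2 - (p:ℝ)/(q:ℝ)) - s|) := by
        rw [hid, abs_mul, abs_mul, abs_of_nonneg (by positivity : (0:ℝ) ≤ (q:ℝ)^2)]
    _ ≤ (q:ℝ)^2 * (A * (A + s)) := by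
        gcongr
        calc |((1 + s)/2 - (p:ℝ)/(q:ℝ)) - s| ≤ A + |s| := abs_sub _ _
        _ = A + s := by rw [abs_of_nonneg hs0]
  -- bound q
  have hqB : (q:ℝ) * (c * (c - s)) < 1 := by
    have t1 : c^2*(q:ℝ)^2 * 1 ≤ c^2*(q:ℝ)^2 * ((q:ℝ)^2 * (A * (A + s))) :=
      mul_le_mul_of_nonneg_left hkey (by positivity)
    have t2 : (A*(c*(q:ℝ)^2))*(A*(c*(q:ℝ)^2)) < 1 := by
      nlinarith [hAlt, mul_nonneg hA0 hcq.le]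
    have t3 : (A*(c*(q:ℝ)^2))*(s*(c*(q:ℝ)^2)) < 1*(s*(c*(q:ℝ)^2)) :=
      mul_lt_mul_of_pos_right hAlt (by positivity)
    have t4 : (0:ℝ) ≤ ((q:ℝ) - 1) * (c * (c - s)) :=
      mul_nonneg (by linarith) (by positivity)
    nlinarith [t1, t2, t3, t4, hq1, hc0, hcs]
  have hqQ : q ≤ Q := by
    have h1 : (q:ℝ) < 1 / (c * (c - s)) := by
      rw [lt_div_iff₀ (by positivity)]; exact hqB
    have h2 : (q:ℝ) ≤ (⌈1 / (c * (c - s))⌉ : ℝ) := h1.le.trans (Int.le_ceil _)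
    have : q ≤ ⌈1 / (c * (c - s))⌉ := by exact_mod_cast h2
    exact this.trans (le_max_right _ _)
  -- bound p
  have hAle1 : A < 1 := by
    have hle : c ≤ c * (q:ℝ)^2 := by
      nlinarith [mul_le_mul hq1 hq1 zero_le_one hq0.le, hc0]
    have : 1 / (c * (q:ℝ)^2) ≤ 1 / c := by
      apply one_div_le_one_div_of_le hc0 hle
    calc A < 1 / (c * (q:ℝ)^2) := habs
    _ ≤ 1 / c := this
    _ < 1 := by rw [div_lt_one hc0]; linarith
  have hpabs : |(p:ℝ)| < 3 * (q:ℝ) := by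
    have h1 : |(p:ℝ)/(q:ℝ)| < 3 := by
      have key := abs_sub_abs_le_abs_sub ((p:ℝ)/(q:ℝ)) ((1+s)/2)
      have e1 : |(p:ℝ)/(q:ℝ) - (1+s)/2| = A := by rw [abs_sub_comm, hA]
      have e2 : |(1+s)/2| = (1+s)/2 := abs_of_nonneg (by linarith)
      rw [e1, e2] at key
      linarith
    rw [abs_div, abs_of_nonneg (le_of_lt hq0), div_lt_iff₀ hq0] at h1
    linarith
  have hpQ : |p| ≤ 3 * Q := by
    have h3q : |p| ≤ 3 * q := by
      have h : ((|p| : ℤ) : ℝ) < ((3*q : ℤ) : ℝ) := by push_cast; exact hpabs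
      exact (by exact_mod_cast h : |p| < 3*q).le
    calc |p| ≤ 3 * q := h3q
    _ ≤ 3 * Q := by linarith [hqQ]
  refine ⟨?_, hq, hqQ⟩
  constructor
  · linarith [neg_abs_le p, hpQ]
  · linarith [le_abs_self p, hpQ]
end

section
/- Define k(α) = limsup_{q→∞} (inf_p |q(qα - p)|)^{-1} for irrational α. Then k(α) ≥ √5 for every irrational α. -/
open Filter

namespace Hurw

noncomputable def X (α : ℝ) : ℕ → ℝ
  | 0 => α
  | n + 1 => (Int.fract (X α n))⁻¹

noncomputable def pq (α : ℝ) : ℕ → ℤ × ℤ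
  | 0 => (1, 0)
  | 1 => (⌊α⌋, 1)
  | n + 2 => (⌊X α (n + 1)⌋ * (pq α (n + 1)).1 + (pq α n).1,
              ⌊X α (n + 1)⌋ * (pq α (n + 1)).2 + (pq α n).2)

noncomputable def P (α : ℝ) (n : ℕ) : ℤ := (pq α n).1
noncomputable def Q (α : ℝ) (n : ℕ) : ℤ := (pq α n).2

variable {α : ℝ}

lemma irrX (hα : Irrational α) : ∀ n, Irrational (X α n)
  | 0 => hα
  | n + 1 => (((irrX hα n).sub_intCast ⌊X α n⌋).inv)

lemma X_pos_lt_one (hα : Irrational α) (n : ℕ) : 0 < Int.fract (X α n) ∧ Int.fract (X α n) < 1 := by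
  refine ⟨lt_of_le_of_ne (Int.fract_nonneg _) ?_, Int.fract_lt_one _⟩
  intro h
  apply ((irrX hα n).sub_intCast ⌊X α n⌋)
  rw [Int.fract] at h
  exact ⟨0, by rw [← h]; simp⟩

lemma one_lt_X (hα : Irrational α) (n : ℕ) : 1 < X α (n + 1) := by
  have h := X_pos_lt_one hα n
  rw [X]
  exact (one_lt_inv₀ h.1).2 h.2

lemma X_succ_eq (hα : Irrational α) (n : ℕ) : X α (n + 1) = ⌊X α (n + 1)⌋ + (X α (n + 2))⁻¹ := by
  have h := X_pos_lt_one hα (n + 1)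
  have : (X α (n + 2))⁻¹ = Int.fract (X α (n + 1)) := by
    rw [show X α (n+2) = (Int.fract (X α (n+1)))⁻¹ from rfl, inv_inv]
  rw [this, Int.fract]; ring

end Hurw

namespace Hurw
variable {α : ℝ}

lemma P_rec (n : ℕ) : P α (n + 2) = ⌊X α (n + 1)⌋ * P α (n + 1) + P α n := rfl
lemma Q_rec (n : ℕ) : Q α (n + 2) = ⌊X α (n + 1)⌋ * Q α (n + 1) + Q α n := rfl
lemma Q_zero : Q α 0 = 0 := rfl
lemma Q_one : Q α 1 = 1 := rfl

lemma one_le_floor (hα : Irrational α) (n : ℕ) : 1 ≤ ⌊X α (n + 1)⌋ :=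
  Int.le_floor.2 (by exact_mod_cast (one_lt_X hα n).le)

lemma Q_pos_aux (hα : Irrational α) : ∀ n, 0 ≤ Q α n ∧ 0 < Q α (n + 1) := by
  intro n
  induction n with
  | zero => simp [Q_zero, Q_one]
  | succ n ih =>
    refine ⟨ih.2.le, ?_⟩
    rw [Q_rec]
    nlinarith [one_le_floor hα n, ih.1, ih.2]

lemma Q_pos (hα : Irrational α) (n : ℕ) : 0 < Q α (n + 1) := (Q_pos_aux hα n).2

lemma Q_nonneg (hα : Irrational α) (n : ℕ) : 0 ≤ Q α n := (Q_pos_aux hα n).1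

lemma Q_mono (hα : Irrational α) : ∀ n, Q α n ≤ Q α (n + 1)
  | 0 => by norm_num [Q_zero, Q_one]
  | n + 1 => by
    rw [Q_rec]
    nlinarith [one_le_floor hα n, Q_pos hα n, Q_nonneg hα n]

lemma Q_growth_aux (hα : Irrational α) (n : ℕ) :
    ((n : ℤ) ≤ Q α (n + 1)) ∧ ((n : ℤ) + 1 ≤ Q α (n + 2)) := by
  induction n with
  | zero =>
    refine ⟨by norm_num [Q_one], ?_⟩
    rw [Q_rec]
    norm_num [Q_zero, Q_one]
    exact one_le_floor hα 0
  | succ n ih =>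
    refine ⟨by exact_mod_cast ih.2, ?_⟩
    rw [show n + 1 + 2 = n + 1 + 2 from rfl, Q_rec]
    push_cast
    nlinarith [one_le_floor hα (n + 1), Q_pos hα n, Q_pos hα (n + 1), ih.2]

lemma Q_growth (hα : Irrational α) (n : ℕ) : (n : ℤ) ≤ Q α (n + 1) :=
  (Q_growth_aux hα n).1

noncomputable def E (α : ℝ) (n : ℕ) : ℝ := (Q α n : ℝ) * α - (P α n : ℝ)

lemma E_zero : E α 0 = -1 := by
  unfold E
  rw [show Q α 0 = (0 : ℤ) from rfl, show P α 0 = (1 : ℤ) from rfl]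
  push_cast
  ring

lemma E_one : E α 1 = Int.fract α := by
  unfold E
  rw [show Q α 1 = (1 : ℤ) from rfl, show P α 1 = ⌊α⌋ from rfl, Int.fract]
  push_cast
  ring

lemma E_rec (n : ℕ) : E α (n + 2) = (⌊X α (n + 1)⌋ : ℝ) * E α (n + 1) + E α n := by
  unfold E
  rw [P_rec, Q_rec]
  push_cast
  ring

lemma E_succ (hα : Irrational α) : ∀ n, X α (n + 1) * E α (n + 1) = -E α n := by
  intro n
  induction n with
  | zero =>
    rw [E_zero, E_one, show X α 1 = (Int.fract (X α 0))⁻¹ from rfl,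
      show Int.fract α = Int.fract (X α 0) from rfl,
      inv_mul_cancel₀ (ne_of_gt (X_pos_lt_one hα 0).1)]
    norm_num
  | succ n ih =>
    have hxne : X α (n + 2) ≠ 0 := ne_of_gt (lt_trans zero_lt_one (one_lt_X hα (n + 1)))
    have hx : X α (n + 2) * (X α (n + 1) - (⌊X α (n + 1)⌋ : ℝ)) = 1 := by
      have h1 := X_succ_eq hα n
      have h2 : X α (n + 1) - (⌊X α (n + 1)⌋ : ℝ) = (X α (n + 2))⁻¹ := by linarith
      rw [h2, mul_inv_cancel₀ hxne]
    rw [E_rec]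
    linear_combination (X α (n + 2)) * ih - (E α (n + 1)) * hx

lemma key (hα : Irrational α) : ∀ n,
    E α n * (X α (n + 1) * (Q α (n + 1) : ℝ) + (Q α n : ℝ)) = (-1) ^ (n + 1) * X α (n + 1) := by
  intro n
  induction n with
  | zero =>
    rw [E_zero, show Q α 1 = (1 : ℤ) from rfl, show Q α 0 = (0 : ℤ) from rfl]
    push_cast
    ring
  | succ n ih =>
    have h2 := E_succ hα n
    have hxne : X α (n + 2) ≠ 0 := ne_of_gt (lt_trans zero_lt_one (one_lt_X hα (n + 1)))
    have hx : X α (n + 2) * (X α (n + 1) - (⌊X α (n + 1)⌋ : ℝ)) = 1 := by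
      have h1 := X_succ_eq hα n
      have h2' : X α (n + 1) - (⌊X α (n + 1)⌋ : ℝ) = (X α (n + 2))⁻¹ := by linarith
      rw [h2', mul_inv_cancel₀ hxne]
    rw [Q_rec]
    push_cast
    refine mul_left_cancel₀ (ne_of_gt (lt_trans zero_lt_one (one_lt_X hα n))) ?_
    linear_combination
      (X α (n + 2) * ((⌊X α (n + 1)⌋ : ℝ) * (Q α (n + 1) : ℝ) + (Q α n : ℝ)) + (Q α (n + 1) : ℝ)) * h2
      + (-(X α (n + 2))) * ih + ((E α n) * (Q α (n + 1) : ℝ)) * hx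

lemma Eabs_one (hα : Irrational α) (n : ℕ) :
    |E α (n + 1)| * (X α (n + 1) * (Q α (n + 1) : ℝ) + (Q α n : ℝ)) = 1 := by
  have hk := key hα (n + 1)
  have hx2pos : 0 < X α (n + 2) := lt_trans zero_lt_one (one_lt_X hα (n + 1))
  have hQ2 : (0 : ℝ) < (Q α (n + 2) : ℝ) := by exact_mod_cast Q_pos hα (n + 1)
  have hQ1 : (0 : ℝ) < (Q α (n + 1) : ℝ) := by exact_mod_cast Q_pos hα n
  have hD : 0 < X α (n + 2) * (Q α (n + 2) : ℝ) + (Q α (n + 1) : ℝ) := by positivity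
  have habs : |E α (n + 1)| * (X α (n + 2) * (Q α (n + 2) : ℝ) + (Q α (n + 1) : ℝ))
      = X α (n + 2) := by
    rw [show |E α (n + 1)| * (X α (n + 2) * (Q α (n + 2) : ℝ) + (Q α (n + 1) : ℝ))
        = |E α (n + 1)| * |X α (n + 2) * (Q α (n + 2) : ℝ) + (Q α (n + 1) : ℝ)| by
      rw [abs_of_pos hD], ← abs_mul, hk, abs_mul, abs_pow, abs_neg, abs_one, one_pow, one_mul,
      abs_of_pos hx2pos]
  have hx : X α (n + 2) * (X α (n + 1) - (⌊X α (n + 1)⌋ : ℝ)) = 1 := by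
    have h1 := X_succ_eq hα n
    have h2' : X α (n + 1) - (⌊X α (n + 1)⌋ : ℝ) = (X α (n + 2))⁻¹ := by linarith
    rw [h2', mul_inv_cancel₀ (ne_of_gt hx2pos)]
  have hQrecR : ((Q α (n + 2) : ℤ) : ℝ)
      = (⌊X α (n + 1)⌋ : ℝ) * (Q α (n + 1) : ℝ) + (Q α n : ℝ) := by
    rw [Q_rec]; push_cast; ring
  refine mul_left_cancel₀ (ne_of_gt hx2pos) ?_
  linear_combination habs + (|E α (n + 1)| * (Q α (n + 1) : ℝ)) * hx
    - (|E α (n + 1)| * X α (n + 2)) * hQrecR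

lemma two_lt_sqrt5 : (2 : ℝ) < Real.sqrt 5 := by
  have h5 : Real.sqrt 5 ^ 2 = 5 := Real.sq_sqrt (by norm_num)
  have h5pos : 0 < Real.sqrt 5 := Real.sqrt_pos.2 (by norm_num)
  nlinarith

lemma grow (hα : Irrational α) (m : ℕ)
    (h1 : X α (m + 1) + (Q α m : ℝ) / (Q α (m + 1) : ℝ) ≤ Real.sqrt 5)
    (h2 : X α (m + 2) + (Q α (m + 1) : ℝ) / (Q α (m + 2) : ℝ) ≤ Real.sqrt 5) :
    (Real.sqrt 5 - 1) / 2 < (Q α (m + 1) : ℝ) / (Q α (m + 2) : ℝ) := by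
  have h5 : Real.sqrt 5 ^ 2 = 5 := Real.sq_sqrt (by norm_num)
  have h5pos : (0 : ℝ) < Real.sqrt 5 := Real.sqrt_pos.2 (by norm_num)
  have h2s := two_lt_sqrt5
  have hQ1 : (0 : ℝ) < (Q α (m + 1) : ℝ) := by exact_mod_cast Q_pos hα m
  have hQ2 : (0 : ℝ) < (Q α (m + 2) : ℝ) := by exact_mod_cast Q_pos hα (m + 1)
  set r : ℝ := (Q α (m + 1) : ℝ) / (Q α (m + 2) : ℝ) with hr
  have hrpos : 0 < r := by positivity
  have hrle : r ≤ 1 := by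
    rw [hr, div_le_one hQ2]
    exact_mod_cast Q_mono hα (m + 1)
  have hx2pos : 0 < X α (m + 2) := lt_trans zero_lt_one (one_lt_X hα (m + 1))
  -- the identity  (X (m+2))⁻¹ + r⁻¹ = X(m+1) + Q m / Q (m+1)
  have hid : (X α (m + 2))⁻¹ + r⁻¹ = X α (m + 1) + (Q α m : ℝ) / (Q α (m + 1) : ℝ) := by
    have hinv : (X α (m + 2))⁻¹ = X α (m + 1) - (⌊X α (m + 1)⌋ : ℝ) := by
      have := X_succ_eq hα m; linarith
    have hQrecR : ((Q α (m + 2) : ℤ) : ℝ)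
        = (⌊X α (m + 1)⌋ : ℝ) * (Q α (m + 1) : ℝ) + (Q α m : ℝ) := by
      rw [Q_rec]; push_cast; ring
    rw [hr, inv_div, hinv, hQrecR]
    field_simp
    ring
  have hXle : X α (m + 2) ≤ Real.sqrt 5 - r := by
    have : X α (m + 2) + r ≤ Real.sqrt 5 := h2
    linarith
  have h5rpos : 0 < Real.sqrt 5 - r := by linarith
  have hsum : (Real.sqrt 5 - r)⁻¹ + r⁻¹ ≤ Real.sqrt 5 := by
    have hle : (Real.sqrt 5 - r)⁻¹ ≤ (X α (m + 2))⁻¹ := by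
      apply inv_anti₀ hx2pos hXle
    linarith [hid, h1]
  -- clear denominators
  rw [inv_eq_one_div, inv_eq_one_div, div_add_div _ _ (ne_of_gt h5rpos) (ne_of_gt hrpos),
    div_le_iff₀ (by positivity)] at hsum
  have hquad : r ^ 2 - Real.sqrt 5 * r + 1 ≤ 0 := by nlinarith
  have hne : r ^ 2 - Real.sqrt 5 * r + 1 ≠ 0 := by
    intro h
    have h5irr : Irrational (Real.sqrt 5) := Nat.Prime.irrational_sqrt (by norm_num)
    set ρ : ℚ := ((Q α (m + 1) : ℚ) / (Q α (m + 2) : ℚ)) with hρ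
    have hρr : (ρ : ℝ) = r := by rw [hρ, hr]; push_cast; ring
    have hρne : (ρ : ℝ) ≠ 0 := by rw [hρr]; exact ne_of_gt hrpos
    apply h5irr
    refine ⟨(ρ ^ 2 + 1) / ρ, ?_⟩
    push_cast
    rw [hρr, div_eq_iff (ne_of_gt hrpos)]
    linarith [h]
  have hquad' : r ^ 2 - Real.sqrt 5 * r + 1 < 0 := lt_of_le_of_ne hquad hne
  by_contra hle
  push_neg at hle
  nlinarith [hquad', hle, hrle, h5]

lemma good (hα : Irrational α) (n : ℕ)
    (h1 : X α (n + 1) + (Q α n : ℝ) / (Q α (n + 1) : ℝ) ≤ Real.sqrt 5)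
    (h2 : X α (n + 2) + (Q α (n + 1) : ℝ) / (Q α (n + 2) : ℝ) ≤ Real.sqrt 5)
    (h3 : X α (n + 3) + (Q α (n + 2) : ℝ) / (Q α (n + 3) : ℝ) ≤ Real.sqrt 5) : False := by
  have h5 : Real.sqrt 5 ^ 2 = 5 := Real.sq_sqrt (by norm_num)
  have hg1 := grow hα n h1 h2
  have hg2 := grow hα (n + 1) h2 h3
  have hA : (0 : ℝ) < (Q α (n + 1) : ℝ) := by exact_mod_cast Q_pos hα n
  have hB : (0 : ℝ) < (Q α (n + 2) : ℝ) := by exact_mod_cast Q_pos hα (n + 1)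
  have hC : (0 : ℝ) < (Q α (n + 3) : ℝ) := by exact_mod_cast Q_pos hα (n + 2)
  have hCge : (Q α (n + 2) : ℝ) + (Q α (n + 1) : ℝ) ≤ (Q α (n + 3) : ℝ) := by
    have hfl := one_le_floor hα (n + 1)
    have : (Q α (n + 3) : ℤ) = ⌊X α (n + 2)⌋ * Q α (n + 2) + Q α (n + 1) := Q_rec (n + 1)
    have hQB := Q_pos hα (n + 1)
    push_cast [this]
    have : (1 : ℝ) ≤ (⌊X α (n + 2)⌋ : ℝ) := by exact_mod_cast hfl
    nlinarith [hB]
  set g : ℝ := (Real.sqrt 5 - 1) / 2 with hgdef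
  have hgpos : 0 < g := by have := two_lt_sqrt5; rw [hgdef]; linarith
  rw [lt_div_iff₀ hB] at hg1
  rw [show n + 1 + 1 = n + 2 from rfl, show n + 1 + 2 = n + 3 from rfl, lt_div_iff₀ hC] at hg2
  have hsq : g ^ 2 + g = 1 := by rw [hgdef]; nlinarith [h5]
  nlinarith [mul_le_mul_of_nonneg_left hCge hgpos.le, mul_lt_mul_of_pos_left hg1 hgpos,
    hg2, hsq, hgpos]

lemma exists_big (hα : Irrational α) (N : ℕ) :
    ∃ n ≥ N, Real.sqrt 5 < X α (n + 1) + (Q α n : ℝ) / (Q α (n + 1) : ℝ) := by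
  by_contra h
  push_neg at h
  exact good hα N (h N le_rfl) (h (N + 1) (by omega)) (h (N + 2) (by omega))

lemma fract_pos_irr {x : ℝ} (hx : Irrational x) : 0 < Int.fract x := by
  refine lt_of_le_of_ne (Int.fract_nonneg _) ?_
  intro h
  apply hx.sub_intCast ⌊x⌋
  rw [Int.fract] at h
  exact ⟨0, by rw [← h]; simp⟩

lemma inf_pos {x : ℝ} (hx : Irrational x) (q : ℕ) (hq : 0 < q) :
    0 < ⨅ p : ℤ, |(q : ℝ) * ((q : ℝ) * x - (p : ℝ))| := by
  set y : ℝ := (q : ℝ) * x with hy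
  have hyirr : Irrational y := hx.natCast_mul hq.ne'
  set c : ℝ := min (Int.fract y) (1 - Int.fract y) with hc
  have hcpos : 0 < c := by
    refine lt_min (fract_pos_irr hyirr) ?_
    linarith [Int.fract_lt_one y]
  have hqpos : (0 : ℝ) < (q : ℝ) := by exact_mod_cast hq
  have hlb : ∀ p : ℤ, (q : ℝ) * c ≤ |(q : ℝ) * (y - (p : ℝ))| := by
    intro p
    rw [abs_mul, abs_of_pos hqpos]
    refine mul_le_mul_of_nonneg_left ?_ hqpos.le
    rcases le_or_gt (p : ℝ) (⌊y⌋ : ℝ) with hp | hp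
    · have : Int.fract y ≤ y - (p : ℝ) := by rw [Int.fract]; linarith
      calc c ≤ Int.fract y := min_le_left _ _
        _ ≤ y - (p : ℝ) := this
        _ ≤ |y - (p : ℝ)| := le_abs_self _
    · have hp' : (⌊y⌋ : ℝ) + 1 ≤ (p : ℝ) := by exact_mod_cast Int.lt_iff_add_one_le.1 (by exact_mod_cast hp)
      have : 1 - Int.fract y ≤ (p : ℝ) - y := by rw [Int.fract]; linarith
      calc c ≤ 1 - Int.fract y := min_le_right _ _
        _ ≤ (p : ℝ) - y := this
        _ ≤ |y - (p : ℝ)| := by rw [abs_sub_comm]; exact le_abs_self _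
  exact lt_of_lt_of_le (by positivity) (le_ciInf hlb)

end Hurw

noncomputable def lagrangeValue (α : ℝ) : ENNReal :=
  Filter.limsup
    (fun q : ℕ => ENNReal.ofReal ((⨅ p : ℤ, |(q : ℝ) * ((q : ℝ) * α - (p : ℝ))|)⁻¹))
    Filter.atTop

theorem stmt_7 (α : ℝ) (hα : Irrational α) :
    ENNReal.ofReal (Real.sqrt 5) ≤ lagrangeValue α := by
  refine Filter.le_limsup_of_frequently_le' ?_
  rw [Filter.frequently_atTop]
  intro N
  obtain ⟨n, hnN, hs⟩ := Hurw.exists_big hα N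
  have hQnn : (0 : ℤ) ≤ Hurw.Q α (n + 1) := (Hurw.Q_pos hα n).le
  refine ⟨(Hurw.Q α (n + 1)).toNat, ?_, ?_⟩
  · show N ≤ (Hurw.Q α (n + 1)).toNat
    rw [Int.le_toNat hQnn]
    exact le_trans (by exact_mod_cast hnN) (Hurw.Q_growth hα n)
  · set q : ℕ := (Hurw.Q α (n + 1)).toNat with hqdef
    have hcast : ((q : ℕ) : ℝ) = ((Hurw.Q α (n + 1) : ℤ) : ℝ) := by
      rw [hqdef]; exact_mod_cast Int.toNat_of_nonneg hQnn
    have hQrpos : (0 : ℝ) < ((Hurw.Q α (n + 1) : ℤ) : ℝ) := by exact_mod_cast Hurw.Q_pos hα n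
    have hqpos : 0 < q := by
      rw [hqdef, Int.lt_toNat]
      exact_mod_cast Hurw.Q_pos hα n
    apply ENNReal.ofReal_le_ofReal
    set I : ℝ := ⨅ p : ℤ, |(q : ℝ) * ((q : ℝ) * α - (p : ℝ))| with hI
    have hIpos : 0 < I := Hurw.inf_pos hα q hqpos
    have hbdd : BddBelow (Set.range fun p : ℤ => |(q : ℝ) * ((q : ℝ) * α - (p : ℝ))|) := by
      refine ⟨0, ?_⟩
      rintro x ⟨p, rfl⟩
      exact abs_nonneg _
    have hupper : I ≤ |(q : ℝ) * ((q : ℝ) * α - ((Hurw.P α (n + 1) : ℤ) : ℝ))| :=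
      ciInf_le hbdd (Hurw.P α (n + 1))
    have hEeq : |(q : ℝ) * ((q : ℝ) * α - ((Hurw.P α (n + 1) : ℤ) : ℝ))|
        = ((Hurw.Q α (n + 1) : ℤ) : ℝ) * |Hurw.E α (n + 1)| := by
      rw [hcast, abs_mul, abs_of_pos hQrpos, Hurw.E]
    have hE1 := Hurw.Eabs_one hα n
    have hEpos : 0 < |Hurw.E α (n + 1)| := by
      rcases (abs_nonneg (Hurw.E α (n + 1))).lt_or_eq with h | h
      · exact h
      · rw [← h, zero_mul] at hE1; norm_num at hE1
    have h5pos : (0 : ℝ) < Real.sqrt 5 := Real.sqrt_pos.2 (by norm_num)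
    -- √5 * Q < X * Q + Qn
    have hD : Real.sqrt 5 * ((Hurw.Q α (n + 1) : ℤ) : ℝ)
        < Hurw.X α (n + 1) * ((Hurw.Q α (n + 1) : ℤ) : ℝ) + ((Hurw.Q α n : ℤ) : ℝ) := by
      have h := mul_lt_mul_of_pos_right hs hQrpos
      rw [add_mul, div_mul_cancel₀ _ (ne_of_gt hQrpos)] at h
      exact h
    have hsmall : ((Hurw.Q α (n + 1) : ℤ) : ℝ) * |Hurw.E α (n + 1)| < 1 / Real.sqrt 5 := by
      rw [lt_div_iff₀ h5pos]
      calc ((Hurw.Q α (n + 1) : ℤ) : ℝ) * |Hurw.E α (n + 1)| * Real.sqrt 5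
          = |Hurw.E α (n + 1)| * (Real.sqrt 5 * ((Hurw.Q α (n + 1) : ℤ) : ℝ)) := by ring
        _ < |Hurw.E α (n + 1)| * (Hurw.X α (n + 1) * ((Hurw.Q α (n + 1) : ℤ) : ℝ)
              + ((Hurw.Q α n : ℤ) : ℝ)) := by
            exact mul_lt_mul_of_pos_left hD hEpos
        _ = 1 := hE1
    have hIlt : I ≤ 1 / Real.sqrt 5 := le_of_lt (lt_of_le_of_lt (hupper.trans_eq hEeq) hsmall)
    have hfin := one_div_le_one_div_of_le hIpos hIlt
    rw [one_div_one_div] at hfin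
    rw [← one_div]
    exact hfin
end
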